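/- Let μ > 0 and β₀, β₁ ∈ ℝ. Suppose the denominator D(ξ,τ) = 1 − (β₀/(2μ)) ∫_{−∞}^ξ φ₀(y) dy − (β₁/(2μ)) e^{−τ/2} φ₀(ξ) is strictly positive for all ξ ∈ ℝ and all τ in an interval I. Then the diffusive N-wave w_N(ξ,τ) = (β₀ φ₀(ξ) + β₁ e^{−τ/2} φ₁(ξ)) / D(ξ,τ) equals −2μ ∂_ξ log D(ξ,τ) and satisfies the rescaled Burgers equation ∂_τ w_N = μ ∂_ξ² w_N + (1/2) ∂_ξ(ξ w_N) − w_N ∂_ξ w_N for all ξ ∈ ℝ and τ ∈ I. -/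

import Mathlib

open MeasureTheory

/-- The Gaussian `φ₀(ξ) = (4πμ)^{−1/2} e^{−ξ²/(4μ)}`. -/
noncomputable def phi0 (μ ξ : ℝ) : ℝ :=
  (Real.sqrt (4 * Real.pi * μ))⁻¹ * Real.exp (-ξ ^ 2 / (4 * μ))

/-- The denominator of the diffusive N-wave:
`D(ξ,τ) = 1 − (β₀/(2μ)) ∫_{−∞}^ξ φ₀ − (β₁/(2μ)) e^{−τ/2} φ₀(ξ)`. -/
noncomputable def Dden (μ β₀ β₁ ξ τ : ℝ) : ℝ :=
  1 - β₀ / (2 * μ) * (∫ y in Set.Iio ξ, phi0 μ y) - β₁ / (2 * μ) * Real.exp (-τ / 2) * phi0 μ ξ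

/-- The diffusive N-wave `w_N(ξ,τ) = (β₀ φ₀(ξ) + β₁ e^{−τ/2} φ₁(ξ)) / D(ξ,τ)`, `φ₁ = φ₀'`. -/
noncomputable def wN (μ β₀ β₁ ξ τ : ℝ) : ℝ :=
  (β₀ * phi0 μ ξ + β₁ * Real.exp (-τ / 2) * deriv (phi0 μ) ξ) / Dden μ β₀ β₁ ξ τ

lemma phi0_hasDerivAt (μ : ℝ) (hμ : 0 < μ) (x : ℝ) :
    HasDerivAt (phi0 μ) (-(x / (2 * μ)) * phi0 μ x) x := by
  have h1 : HasDerivAt (fun y : ℝ => -y ^ 2 / (4 * μ)) (-(2 * x) / (4 * μ)) x := by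
    have := ((hasDerivAt_pow 2 x).neg).div_const (4 * μ)
    simpa using this
  have h2 := (h1.exp).const_mul (Real.sqrt (4 * Real.pi * μ))⁻¹
  have hfn : phi0 μ = fun y => (Real.sqrt (4 * Real.pi * μ))⁻¹ * Real.exp (-y ^ 2 / (4 * μ)) := rfl
  rw [hfn]
  refine h2.congr_deriv ?_
  ring

lemma deriv_phi0 (μ : ℝ) (hμ : 0 < μ) :
    deriv (phi0 μ) = fun x => -(x / (2 * μ)) * phi0 μ x :=
  funext fun x => (phi0_hasDerivAt μ hμ x).deriv

lemma continuous_phi0 (μ : ℝ) : Continuous (phi0 μ) := by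
  unfold phi0
  fun_prop

lemma integrable_phi0 (μ : ℝ) (hμ : 0 < μ) : Integrable (phi0 μ) := by
  have hb : (0:ℝ) < (4 * μ)⁻¹ := by positivity
  have h := (integrable_exp_neg_mul_sq hb).const_mul (Real.sqrt (4 * Real.pi * μ))⁻¹
  have : phi0 μ = fun x => (Real.sqrt (4 * Real.pi * μ))⁻¹ * Real.exp (-(4 * μ)⁻¹ * x ^ 2) := by
    funext x; unfold phi0; congr 1; ring
  rw [this]; exact h

lemma intIio_hasDerivAt (μ : ℝ) (hμ : 0 < μ) (x : ℝ) :
    HasDerivAt (fun u => ∫ y in Set.Iio u, phi0 μ y) (phi0 μ x) x := by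
  have hint := integrable_phi0 μ hμ
  have hcont := continuous_phi0 μ
  have heq : (fun u => ∫ y in Set.Iio u, phi0 μ y)
      = fun u => (∫ y in Set.Iic (0:ℝ), phi0 μ y) + ∫ y in (0:ℝ)..u, phi0 μ y := by
    funext u
    rw [← MeasureTheory.integral_Iic_eq_integral_Iio,
      ← intervalIntegral.integral_Iic_sub_Iic hint.integrableOn hint.integrableOn]
    ring
  rw [heq]
  exact (intervalIntegral.integral_hasDerivAt_right hint.intervalIntegrable
    ⟨Set.univ, Filter.univ_mem, hcont.aestronglyMeasurable.restrict⟩ hcont.continuousAt).const_add _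

noncomputable def P1 (μ x : ℝ) : ℝ := -(x / (2 * μ)) * phi0 μ x
noncomputable def P2 (μ x : ℝ) : ℝ := -(1 / (2 * μ)) * phi0 μ x + -(x / (2 * μ)) * P1 μ x
noncomputable def P3 (μ x : ℝ) : ℝ :=
  -(1 / (2 * μ)) * P1 μ x + (-(1 / (2 * μ)) * P1 μ x + -(x / (2 * μ)) * P2 μ x)
noncomputable def NWf (μ β₀ β₁ t x : ℝ) : ℝ :=
  β₀ * phi0 μ x + β₁ * Real.exp (-t / 2) * P1 μ x
noncomputable def NXf (μ β₀ β₁ t x : ℝ) : ℝ :=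
  β₀ * P1 μ x + β₁ * Real.exp (-t / 2) * P2 μ x
noncomputable def NXXf (μ β₀ β₁ t x : ℝ) : ℝ :=
  β₀ * P2 μ x + β₁ * Real.exp (-t / 2) * P3 μ x
noncomputable def DXf (μ β₀ β₁ t x : ℝ) : ℝ :=
  -(β₀ / (2 * μ) * phi0 μ x) - β₁ / (2 * μ) * Real.exp (-t / 2) * P1 μ x
noncomputable def DXXf (μ β₀ β₁ t x : ℝ) : ℝ :=
  -(β₀ / (2 * μ) * P1 μ x) - β₁ / (2 * μ) * Real.exp (-t / 2) * P2 μ x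
noncomputable def WXf (μ β₀ β₁ t x : ℝ) : ℝ :=
  (NXf μ β₀ β₁ t x * Dden μ β₀ β₁ x t - NWf μ β₀ β₁ t x * DXf μ β₀ β₁ t x)
    / Dden μ β₀ β₁ x t ^ 2
noncomputable def WXXf (μ β₀ β₁ t x : ℝ) : ℝ :=
  ((NXXf μ β₀ β₁ t x * Dden μ β₀ β₁ x t + NXf μ β₀ β₁ t x * DXf μ β₀ β₁ t x
      - (NXf μ β₀ β₁ t x * DXf μ β₀ β₁ t x + NWf μ β₀ β₁ t x * DXXf μ β₀ β₁ t x))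
        * Dden μ β₀ β₁ x t
    - (NXf μ β₀ β₁ t x * Dden μ β₀ β₁ x t - NWf μ β₀ β₁ t x * DXf μ β₀ β₁ t x)
        * (2 * DXf μ β₀ β₁ t x)) / Dden μ β₀ β₁ x t ^ 3

lemma hasDerivAt_lin (μ x : ℝ) : HasDerivAt (fun y : ℝ => -(y / (2 * μ))) (-(1 / (2 * μ))) x :=
  ((hasDerivAt_id x).div_const (2 * μ)).neg

lemma hasDerivAt_P1 (μ : ℝ) (hμ : 0 < μ) (x : ℝ) :
    HasDerivAt (fun x => P1 μ x) (P2 μ x) x :=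
  ((hasDerivAt_lin μ x).mul (phi0_hasDerivAt μ hμ x)).congr_deriv (by unfold P2 P1; ring)

lemma hasDerivAt_P2 (μ : ℝ) (hμ : 0 < μ) (x : ℝ) :
    HasDerivAt (fun x => P2 μ x) (P3 μ x) x :=
  (((phi0_hasDerivAt μ hμ x).const_mul (-(1 / (2 * μ)))).add
    ((hasDerivAt_lin μ x).mul (hasDerivAt_P1 μ hμ x))).congr_deriv (by unfold P3 P2 P1; ring)

lemma hasDerivAt_D (μ β₀ β₁ t x : ℝ) (hμ : 0 < μ) :
    HasDerivAt (fun x => Dden μ β₀ β₁ x t) (DXf μ β₀ β₁ t x) x :=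
  ((((intIio_hasDerivAt μ hμ x).const_mul (β₀ / (2 * μ))).const_sub 1).sub
    ((phi0_hasDerivAt μ hμ x).const_mul (β₁ / (2 * μ) * Real.exp (-t / 2)))).congr_deriv
    (by unfold DXf P1; ring)

lemma hasDerivAt_DXf (μ β₀ β₁ t x : ℝ) (hμ : 0 < μ) :
    HasDerivAt (fun x => DXf μ β₀ β₁ t x) (DXXf μ β₀ β₁ t x) x :=
  ((((phi0_hasDerivAt μ hμ x).const_mul (β₀ / (2 * μ))).neg).sub
    ((hasDerivAt_P1 μ hμ x).const_mul (β₁ / (2 * μ) * Real.exp (-t / 2)))).congr_deriv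
    (by unfold DXXf P2 P1; ring)

lemma hasDerivAt_NWf (μ β₀ β₁ t x : ℝ) (hμ : 0 < μ) :
    HasDerivAt (fun x => NWf μ β₀ β₁ t x) (NXf μ β₀ β₁ t x) x :=
  (((phi0_hasDerivAt μ hμ x).const_mul β₀).add
    ((hasDerivAt_P1 μ hμ x).const_mul (β₁ * Real.exp (-t / 2)))).congr_deriv
    (by unfold NXf P2 P1; ring)

lemma hasDerivAt_NXf (μ β₀ β₁ t x : ℝ) (hμ : 0 < μ) :
    HasDerivAt (fun x => NXf μ β₀ β₁ t x) (NXXf μ β₀ β₁ t x) x :=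
  (((hasDerivAt_P1 μ hμ x).const_mul β₀).add
    ((hasDerivAt_P2 μ hμ x).const_mul (β₁ * Real.exp (-t / 2)))).congr_deriv
    (by unfold NXXf P3 P2 P1; ring)

lemma wN_eq (μ β₀ β₁ x t : ℝ) (hμ : 0 < μ) :
    wN μ β₀ β₁ x t = NWf μ β₀ β₁ t x / Dden μ β₀ β₁ x t := by
  unfold wN NWf
  rw [deriv_phi0 μ hμ]
  rfl

lemma hasDerivAt_wN (μ β₀ β₁ t x : ℝ) (hμ : 0 < μ) (hne : Dden μ β₀ β₁ x t ≠ 0) :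
    HasDerivAt (fun x => wN μ β₀ β₁ x t) (WXf μ β₀ β₁ t x) x := by
  have hfn : (fun x => wN μ β₀ β₁ x t) = fun x => NWf μ β₀ β₁ t x / Dden μ β₀ β₁ x t :=
    funext fun x => wN_eq μ β₀ β₁ x t hμ
  rw [hfn]
  exact (hasDerivAt_NWf μ β₀ β₁ t x hμ).div (hasDerivAt_D μ β₀ β₁ t x hμ) hne

lemma hasDerivAt_WXf (μ β₀ β₁ t x : ℝ) (hμ : 0 < μ) (hne : Dden μ β₀ β₁ x t ≠ 0) :
    HasDerivAt (fun x => WXf μ β₀ β₁ t x) (WXXf μ β₀ β₁ t x) x := by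
  have h := (((hasDerivAt_NXf μ β₀ β₁ t x hμ).mul (hasDerivAt_D μ β₀ β₁ t x hμ)).sub
      ((hasDerivAt_NWf μ β₀ β₁ t x hμ).mul (hasDerivAt_DXf μ β₀ β₁ t x hμ))).div
      ((hasDerivAt_D μ β₀ β₁ t x hμ).pow 2) (pow_ne_zero 2 hne)
  exact h.congr_deriv (by
    unfold WXXf
    push_cast
    simp only [Pi.pow_apply, Pi.sub_apply, Pi.mul_apply]
    field_simp)

set_option maxHeartbeats 1600000 in
theorem stmt9 (μ β₀ β₁ : ℝ) (hμ : 0 < μ) (I : Set ℝ) (hI : I.OrdConnected)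
    (hpos : ∀ ξ : ℝ, ∀ τ ∈ I, 0 < Dden μ β₀ β₁ ξ τ) :
    (∀ ξ : ℝ, ∀ τ ∈ I,
      wN μ β₀ β₁ ξ τ = -(2 * μ) * deriv (fun x => Real.log (Dden μ β₀ β₁ x τ)) ξ) ∧
    ∀ ξ : ℝ, ∀ τ ∈ I,
      deriv (fun s => wN μ β₀ β₁ ξ s) τ =
        μ * deriv (deriv (fun x => wN μ β₀ β₁ x τ)) ξ
          + 1 / 2 * deriv (fun x => x * wN μ β₀ β₁ x τ) ξ
          - wN μ β₀ β₁ ξ τ * deriv (fun x => wN μ β₀ β₁ x τ) ξ := by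
  constructor
  · intro ξ τ hτ
    have hne : Dden μ β₀ β₁ ξ τ ≠ 0 := (hpos ξ τ hτ).ne'
    have hlog : deriv (fun x => Real.log (Dden μ β₀ β₁ x τ)) ξ
        = DXf μ β₀ β₁ τ ξ / Dden μ β₀ β₁ ξ τ :=
      ((hasDerivAt_D μ β₀ β₁ τ ξ hμ).log hne).deriv
    rw [hlog, wN_eq μ β₀ β₁ ξ τ hμ]
    unfold NWf DXf P1
    field_simp
    ring
  · intro ξ τ hτ
    have hne : ∀ x, Dden μ β₀ β₁ x τ ≠ 0 := fun x => (hpos x τ hτ).ne'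
    have hderiv1 : deriv (fun x => wN μ β₀ β₁ x τ) = fun x => WXf μ β₀ β₁ τ x :=
      funext fun x => (hasDerivAt_wN μ β₀ β₁ τ x hμ (hne x)).deriv
    have h2 : deriv (fun x => WXf μ β₀ β₁ τ x) ξ = WXXf μ β₀ β₁ τ ξ :=
      (hasDerivAt_WXf μ β₀ β₁ τ ξ hμ (hne ξ)).deriv
    have h3 : deriv (fun x => x * wN μ β₀ β₁ x τ) ξ
        = 1 * wN μ β₀ β₁ ξ τ + ξ * WXf μ β₀ β₁ τ ξ :=
      ((hasDerivAt_id ξ).mul (hasDerivAt_wN μ β₀ β₁ τ ξ hμ (hne ξ))).deriv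
    have h4 : deriv (fun s => wN μ β₀ β₁ ξ s) τ
        = (β₁ * (Real.exp (-τ / 2) * (-1 / 2)) * P1 μ ξ * Dden μ β₀ β₁ ξ τ
            - NWf μ β₀ β₁ τ ξ * -(β₁ / (2 * μ) * (Real.exp (-τ / 2) * (-1 / 2)) * phi0 μ ξ))
          / Dden μ β₀ β₁ ξ τ ^ 2 := by
      have hfn : (fun s => wN μ β₀ β₁ ξ s) = fun s =>
          (β₀ * phi0 μ ξ + β₁ * Real.exp (-s / 2) * P1 μ ξ)
            / (1 - β₀ / (2 * μ) * (∫ y in Set.Iio ξ, phi0 μ y)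
                - β₁ / (2 * μ) * Real.exp (-s / 2) * phi0 μ ξ) := by
        funext s
        rw [wN_eq μ β₀ β₁ ξ s hμ]
        rfl
      rw [hfn]
      have hlin : HasDerivAt (fun s : ℝ => -s / 2) (-1 / 2) τ := by
        simpa using (hasDerivAt_id τ).neg.div_const 2
      have hexp : HasDerivAt (fun s : ℝ => Real.exp (-s / 2))
          (Real.exp (-τ / 2) * (-1 / 2)) τ := hlin.exp
      have hnum : HasDerivAt (fun s => β₀ * phi0 μ ξ + β₁ * Real.exp (-s / 2) * P1 μ ξ)
          (β₁ * (Real.exp (-τ / 2) * (-1 / 2)) * P1 μ ξ) τ :=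
        ((hexp.const_mul β₁).mul_const (P1 μ ξ)).const_add (β₀ * phi0 μ ξ)
      have hden : HasDerivAt (fun s => 1 - β₀ / (2 * μ) * (∫ y in Set.Iio ξ, phi0 μ y)
            - β₁ / (2 * μ) * Real.exp (-s / 2) * phi0 μ ξ)
          (-(β₁ / (2 * μ) * (Real.exp (-τ / 2) * (-1 / 2)) * phi0 μ ξ)) τ :=
        ((hexp.const_mul (β₁ / (2 * μ))).mul_const (phi0 μ ξ)).const_sub
          (1 - β₀ / (2 * μ) * (∫ y in Set.Iio ξ, phi0 μ y))
      exact (hnum.div hden (hne ξ)).deriv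
    rw [h4, hderiv1, h2, h3, wN_eq μ β₀ β₁ ξ τ hμ]
    unfold WXXf WXf NXXf NXf NWf DXXf DXf P3 P2 P1
    have hμ' : μ ≠ 0 := hμ.ne'
    have hDne : Dden μ β₀ β₁ ξ τ ≠ 0 := hne ξ
    beta_reduce
    generalize phi0 μ ξ = g at *
    generalize Real.exp (-τ / 2) = e at *
    generalize Dden μ β₀ β₁ ξ τ = D at hDne ⊢
    field_simp
    ring
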